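/- Let f : D\{0} → ℂ be holomorphic on the punctured unit disc, satisfying the pointwise bound |f(z)| ≤ C|z|^{-2} and the integrability condition ∫_D |f| < ∞. Then z·f(z) extends holomorphically across 0, i.e. the function z ↦ z f(z) has a removable singularity at the origin. -/

import Mathlib

open Metric MeasureTheory Set Filter
open scoped ENNReal Topology

lemma aux_not_integrable (f : ℂ → ℂ) (a δ : ℝ) (ha : 0 < a) (hδ : 0 < δ)
    (hflow : ∀ z ∈ ball (0 : ℂ) δ \ {0}, a * (‖z‖⁻¹) ^ 2 ≤ ‖f z‖) :
    ¬ MeasureTheory.IntegrableOn f (ball (0 : ℂ) δ) := by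
  intro hint
  set r : ℕ → ℝ := fun k => δ * (2⁻¹ : ℝ) ^ k with hr
  have hrpos : ∀ k, 0 < r k := fun k => by positivity
  have hrhalf : ∀ k, r (k + 1) = r k / 2 := fun k => by
    simp [hr, pow_succ]; ring
  set A : ℕ → Set ℂ := fun k => ball (0 : ℂ) (r k) \ closedBall (0 : ℂ) (r (k + 1)) with hA
  have hAmeas : ∀ k, MeasurableSet (A k) :=
    fun k => measurableSet_ball.diff measurableSet_closedBall
  have hAsub : ∀ k, A k ⊆ ball (0 : ℂ) δ \ {0} := by
    intro k z hz
    refine ⟨?_, ?_⟩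
    · have : r k ≤ δ := by
        have : (2⁻¹ : ℝ) ^ k ≤ 1 := pow_le_one₀ (by norm_num) (by norm_num)
        calc r k = δ * (2⁻¹:ℝ)^k := rfl
        _ ≤ δ * 1 := by nlinarith
        _ = δ := by ring
      exact ball_subset_ball this hz.1
    · simp only [mem_singleton_iff]
      intro h
      exact hz.2 (by simp [h, (hrpos (k+1)).le])
  have hdisj : Pairwise (Function.onFun Disjoint A) := by
    have key : ∀ k l, k < l → Disjoint (A k) (A l) := by
      intro k l hkl
      have h1 : A l ⊆ closedBall (0 : ℂ) (r (k + 1)) := by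
        intro z hz
        have : r l ≤ r (k + 1) := by
          apply mul_le_mul_of_nonneg_left _ hδ.le
          exact pow_le_pow_of_le_one (by norm_num) (by norm_num) hkl
        exact closedBall_subset_closedBall this (ball_subset_closedBall hz.1)
      exact Set.disjoint_left.2 fun z hz hz' => hz.2 (h1 hz')
    intro k l hkl
    rcases lt_or_gt_of_ne hkl with h | h
    · exact key k l h
    · exact (key l k h).symm
  -- volume of each annulus
  have hvol : ∀ k, MeasureTheory.volume (A k) = ENNReal.ofReal (3/4 * (r k)^2 * Real.pi) := by
    intro k
    have hsub : closedBall (0 : ℂ) (r (k + 1)) ⊆ ball (0 : ℂ) (r k) := by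
      apply closedBall_subset_ball
      rw [hrhalf]
      linarith [hrpos k]
    rw [hA]
    rw [measure_diff hsub measurableSet_closedBall.nullMeasurableSet
      (by rw [Complex.volume_closedBall]; exact ENNReal.mul_ne_top (by simp [ENNReal.pow_ne_top]) ENNReal.coe_ne_top)]
    rw [Complex.volume_ball, Complex.volume_closedBall]
    have hpi : (NNReal.pi : ℝ≥0∞) = ENNReal.ofReal Real.pi := by
      rw [← NNReal.coe_real_pi, ENNReal.ofReal_coe_nnreal]
    rw [hpi, ← ENNReal.ofReal_pow (hrpos k).le, ← ENNReal.ofReal_pow (hrpos (k+1)).le,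
      ← ENNReal.ofReal_mul (by positivity), ← ENNReal.ofReal_mul (by positivity),
      ← ENNReal.ofReal_sub _ (by positivity), hrhalf]
    congr 1
    ring
  -- lower bound on each annulus integral
  set b : ℝ≥0∞ := ENNReal.ofReal (3/4 * a * Real.pi) with hb
  have hbne : b ≠ 0 := by
    rw [hb]
    simp only [ne_eq, ENNReal.ofReal_eq_zero, not_le]
    positivity
  have hlow : ∀ k, b ≤ ∫⁻ z in A k, ‖f z‖₊ := by
    intro k
    have step1 : ∫⁻ _ in A k, ENNReal.ofReal (a * ((r k)⁻¹)^2) ≤ ∫⁻ z in A k, ‖f z‖₊ := by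
      apply setLIntegral_mono' (hAmeas k)
      intro z hz
      have hz' := hAsub k hz
      have h1 : a * (‖z‖⁻¹)^2 ≤ ‖f z‖ := hflow z hz'
      have hzn : 0 < ‖z‖ := by
        simp only [norm_pos_iff]
        exact fun h => hz'.2 (by simp [h])
      have h2 : ‖z‖ < r k := by simpa using hz.1
      have h3 : a * ((r k)⁻¹)^2 ≤ a * (‖z‖⁻¹)^2 := by
        apply mul_le_mul_of_nonneg_left _ ha.le
        gcongr
      calc ENNReal.ofReal (a * ((r k)⁻¹)^2) ≤ ENNReal.ofReal ‖f z‖ :=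
            ENNReal.ofReal_le_ofReal (h3.trans h1)
        _ = ‖f z‖₊ := by rw [ofReal_norm_eq_enorm]; rfl
    calc b ≤ ENNReal.ofReal (a * ((r k)⁻¹)^2) * MeasureTheory.volume (A k) := by
          rw [hvol k, ← ENNReal.ofReal_mul (by positivity)]
          have : a * ((r k)⁻¹)^2 * (3/4 * (r k)^2 * Real.pi) = 3/4 * a * Real.pi := by
            have h0 : r k ≠ 0 := (hrpos k).ne'
            field_simp
          rw [this]
      _ = ∫⁻ _ in A k, ENNReal.ofReal (a * ((r k)⁻¹)^2) := by
          rw [setLIntegral_const]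
      _ ≤ ∫⁻ z in A k, ‖f z‖₊ := step1
  -- total integral is infinite
  have htop : (∫⁻ z in ⋃ k, A k, ‖f z‖₊) = ⊤ := by
    rw [lintegral_iUnion hAmeas hdisj]
    refine top_le_iff.1 ?_
    calc (⊤ : ℝ≥0∞) = ∑' _ : ℕ, b := (ENNReal.tsum_const_eq_top_of_ne_zero hbne).symm
      _ ≤ ∑' k, ∫⁻ z in A k, ‖f z‖₊ := ENNReal.tsum_le_tsum hlow
  have hfin : (∫⁻ z in ball (0:ℂ) δ, ‖f z‖₊) < ⊤ := hint.2
  have : (∫⁻ z in ⋃ k, A k, ‖f z‖₊) ≤ ∫⁻ z in ball (0:ℂ) δ, ‖f z‖₊ :=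
    lintegral_mono_set (iUnion_subset fun k => (hAsub k).trans diff_subset)
  rw [htop] at this
  exact absurd (this.trans_lt hfin) (by simp)

/-- If `f` is holomorphic on the punctured unit disc, satisfies `|f(z)| ≤ C|z|⁻²` and is
integrable on the disc, then `z ↦ z·f(z)` extends holomorphically across the origin. -/
theorem z_mul_extends_holomorphically
    (f : ℂ → ℂ) (C : ℝ) (hC : 0 < C)
    (hf : DifferentiableOn ℂ f (ball (0 : ℂ) 1 \ {0}))
    (hbound : ∀ z ∈ ball (0 : ℂ) 1 \ {0}, ‖f z‖ ≤ C * (‖z‖⁻¹) ^ 2)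
    (hint : MeasureTheory.IntegrableOn f (ball (0 : ℂ) 1)) :
    ∃ g : ℂ → ℂ, DifferentiableOn ℂ g (ball (0 : ℂ) 1) ∧
      ∀ z ∈ ball (0 : ℂ) 1 \ {0}, g z = z * f z := by
  have hs : ball (0 : ℂ) 1 ∈ 𝓝 (0 : ℂ) := isOpen_ball.mem_nhds (by simp)
  set h : ℂ → ℂ := fun z => z ^ 2 * f z with hh
  have hd : DifferentiableOn ℂ h (ball (0 : ℂ) 1 \ {0}) :=
    ((differentiable_id.pow 2).differentiableOn).mul hf
  have hnormh : ∀ z ∈ ball (0 : ℂ) 1 \ {0}, ‖h z‖ ≤ C := by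
    intro z hz
    have hzn : (0:ℝ) < ‖z‖ := by
      simp only [norm_pos_iff]
      exact fun h0 => hz.2 (by simp [h0])
    have : ‖h z‖ = ‖z‖ ^ 2 * ‖f z‖ := by
      simp [hh, norm_pow]
    rw [this]
    calc ‖z‖ ^ 2 * ‖f z‖ ≤ ‖z‖ ^ 2 * (C * (‖z‖⁻¹) ^ 2) := by
          apply mul_le_mul_of_nonneg_left (hbound z hz) (by positivity)
      _ = C * (‖z‖ ^ 2 * (‖z‖⁻¹) ^ 2) := by ring
      _ = C := by
          have hone : ‖z‖ ^ 2 * (‖z‖⁻¹) ^ 2 = 1 := by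
            rw [inv_pow]
            exact mul_inv_cancel₀ (pow_ne_zero 2 hzn.ne')
          rw [hone, mul_one]
  have hb : BddAbove (norm ∘ h '' (ball (0 : ℂ) 1 \ {0})) := by
    refine ⟨C, ?_⟩
    rintro y ⟨z, hz, rfl⟩
    exact hnormh z hz
  set H : ℂ → ℂ := Function.update h 0 (limUnder (𝓝[≠] (0:ℂ)) h) with hH
  have hHd : DifferentiableOn ℂ H (ball (0 : ℂ) 1) :=
    Complex.differentiableOn_update_limUnder_of_bddAbove hs hd hb
  have hHeq : ∀ z ∈ ball (0 : ℂ) 1 \ {0}, H z = z ^ 2 * f z := by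
    intro z hz
    rw [hH, Function.update_of_ne hz.2]
  -- Key step: H 0 = 0
  have hH0 : H 0 = 0 := by
    by_contra hne
    have ha : 0 < ‖H 0‖ / 2 := by
      have := norm_pos_iff.2 hne
      linarith
    have hcont : ContinuousAt H 0 := (hHd.differentiableAt hs).continuousAt
    rw [Metric.continuousAt_iff] at hcont
    obtain ⟨δ, hδpos, hδ⟩ := hcont (‖H 0‖ / 2) ha
    set δ' := min δ 1 with hδ'
    have hδ'pos : 0 < δ' := lt_min hδpos one_pos
    have hflow : ∀ z ∈ ball (0 : ℂ) δ' \ {0}, (‖H 0‖ / 2) * (‖z‖⁻¹) ^ 2 ≤ ‖f z‖ := by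
      intro z hz
      have hz1 : z ∈ ball (0 : ℂ) 1 \ {0} :=
        ⟨ball_subset_ball (min_le_right δ 1) hz.1, hz.2⟩
      have hzd : dist z 0 < δ := lt_of_lt_of_le (mem_ball.1 hz.1) (min_le_left δ 1)
      have h1 : dist (H z) (H 0) < ‖H 0‖ / 2 := hδ hzd
      have h2 : ‖H 0‖ / 2 ≤ ‖H z‖ := by
        have := norm_sub_norm_le (H 0) (H z)
        rw [dist_eq_norm, norm_sub_rev] at h1
        linarith
      rw [hHeq z hz1] at h2
      have hzn : (0:ℝ) < ‖z‖ := by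
        simp only [norm_pos_iff]
        exact fun h0 => hz.2 (by simp [h0])
      have h3 : ‖(z:ℂ) ^ 2 * f z‖ = ‖z‖ ^ 2 * ‖f z‖ := by simp [norm_pow]
      rw [h3] at h2
      have hinv : (0:ℝ) ≤ (‖z‖⁻¹) ^ 2 := by positivity
      have h4 := mul_le_mul_of_nonneg_right h2 hinv
      have hone : ‖z‖ ^ 2 * (‖z‖⁻¹) ^ 2 = 1 := by
        rw [inv_pow]
        exact mul_inv_cancel₀ (pow_ne_zero 2 hzn.ne')
      calc ‖H 0‖ / 2 * (‖z‖⁻¹) ^ 2 ≤ ‖z‖ ^ 2 * ‖f z‖ * (‖z‖⁻¹) ^ 2 := h4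
        _ = ‖f z‖ * (‖z‖ ^ 2 * (‖z‖⁻¹) ^ 2) := by ring
        _ = ‖f z‖ := by rw [hone, mul_one]
    exact aux_not_integrable f (‖H 0‖ / 2) δ' ha hδ'pos hflow
      (hint.mono_set (ball_subset_ball (min_le_right δ 1)))
  -- Conclude with dslope
  refine ⟨dslope H 0, (Complex.differentiableOn_dslope hs).2 hHd, ?_⟩
  intro z hz
  rw [dslope_of_ne H hz.2, slope_def_field]
  rw [hHeq z hz, hH0]
  have hzne : z ≠ 0 := hz.2
  field_simp
  ring
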